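/- arXiv:1703.06058 — 8 statements merged into one kernel-verified Lean document; each statement's English description precedes it below -/
import Mathlib

section
/- Let N ≥ 1, V > 0, κ > 0, τ > 0, and for i = 1,…,N let φ_i ≥ 0, μ_i > 0, q_i ≥ 0. Let (u*, v*) belong to K = { (u,v) : u, v ≥ 0 componentwise, 0 ≤ φ_i + u_i − v_i < μ_i for all i, τ Σ_i v_i < 1, Σ_i u_i = Σ_i v_i } and set ω_i = φ_i + u*_i − v*_i, λ = Σ_i v*_i, d_i(ω) = μ_i/(μ_i − ω)², g(λ) = τ/(1 − τλ)². Suppose moreover that u*_i·v*_i = 0 for every i, and that there exists α ∈ ℝ such that for every i: if ω_i > φ_i then V·d_i(ω_i) + κ q_i = α; if ω_i = φ_i then α ≤ V·d_i(ω_i) + κ q_i ≤ α + V·g(λ); if 0 < ω_i < φ_i then V·d_i(ω_i) + κ q_i = α + V·g(λ); and if ω_i = 0 then V·d_i(0) + κ q_i ≥ α + V·g(λ). Then (u*, v*) is a global minimizer over K of F(u, v) = Σ_i [ V·(φ_i + u_i − v_i)/(μ_i − (φ_i + u_i − v_i)) + κ q_i (φ_i + u_i − v_i) ] + Vτ(Σ_i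 v_i)/(1 − τ Σ_i v_i). -/
set_option maxHeartbeats 1000000

/-- Gradient inequality for `x ↦ V x/(m-x) + k x` on `(-∞, m)`. -/
lemma conv_grad2 (V k m x w : ℝ) (hV : 0 < V) (hk : 0 ≤ k) (hm : 0 < m)
    (hx : x < m) (hw : w < m) :
    V * w / (m - w) + k * w + (V * (m / (m - w) ^ 2) + k) * (x - w)
      ≤ V * x / (m - x) + k * x := by
  have hmx : 0 < m - x := by linarith
  have hmw : 0 < m - w := by linarith
  have key : (V * x / (m - x) + k * x)
      - (V * w / (m - w) + k * w + (V * (m / (m - w) ^ 2) + k) * (x - w))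
      = V * (m * (x - w) ^ 2) / ((m - x) * (m - w) ^ 2) := by
    field_simp
    ring
  have h0 : 0 ≤ V * (m * (x - w) ^ 2) / ((m - x) * (m - w) ^ 2) := by positivity
  linarith

/-- Gradient inequality for the congestion term. -/
lemma conv_grad_g (V τ L M : ℝ) (hV : 0 < V) (hτ : 0 < τ) (hL : τ * L < 1) (hM : τ * M < 1) :
    V * τ * L / (1 - τ * L) + V * (τ / (1 - τ * L) ^ 2) * (M - L)
      ≤ V * τ * M / (1 - τ * M) := by
  have h1 : 0 < 1 - τ * L := by linarith
  have h2 : 0 < 1 - τ * M := by linarith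
  have key : V * τ * M / (1 - τ * M)
      - (V * τ * L / (1 - τ * L) + V * (τ / (1 - τ * L) ^ 2) * (M - L))
      = V * (τ ^ 2 * (M - L) ^ 2) / ((1 - τ * M) * (1 - τ * L) ^ 2) := by
    field_simp
    ring
  have h0 : 0 ≤ V * (τ ^ 2 * (M - L) ^ 2) / ((1 - τ * M) * (1 - τ * L) ^ 2) := by positivity
  linarith

/-- sufficiency of the first-order (Kuhn–Tucker) conditions: a
feasible point `(u*, v*)` with complementary inbound/outbound traffic that
satisfies the marginal-cost conditions of Theorem 1 for some multiplier `α` is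
a global minimizer of the per-slot objective `F` over the feasible set `K`. -/
theorem stmt_5 (N : ℕ) (hN : 1 ≤ N) (V κ τ : ℝ) (hV : 0 < V) (hκ : 0 < κ) (hτ : 0 < τ)
    (φ μ q : Fin N → ℝ) (hφ : ∀ i, 0 ≤ φ i) (hμ : ∀ i, 0 < μ i) (hq : ∀ i, 0 ≤ q i)
    (K : Set ((Fin N → ℝ) × (Fin N → ℝ)))
    (hK : K = {p | (∀ i, 0 ≤ p.1 i) ∧ (∀ i, 0 ≤ p.2 i) ∧
        (∀ i, 0 ≤ φ i + p.1 i - p.2 i ∧ φ i + p.1 i - p.2 i < μ i) ∧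
        τ * (∑ i, p.2 i) < 1 ∧ (∑ i, p.1 i) = ∑ i, p.2 i})
    (F : (Fin N → ℝ) × (Fin N → ℝ) → ℝ)
    (hF : F = fun p =>
        (∑ i, (V * (φ i + p.1 i - p.2 i) / (μ i - (φ i + p.1 i - p.2 i)) +
                κ * q i * (φ i + p.1 i - p.2 i))) +
        V * τ * (∑ i, p.2 i) / (1 - τ * (∑ i, p.2 i)))
    (u v : Fin N → ℝ) (hmem : (u, v) ∈ K)
    (ω : Fin N → ℝ) (hω : ω = fun i => φ i + u i - v i)
    (lam : ℝ) (hlam : lam = ∑ i, v i)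
    (d : Fin N → ℝ → ℝ) (hd : d = fun i x => μ i / (μ i - x) ^ 2)
    (g : ℝ → ℝ) (hg : g = fun x => τ / (1 - τ * x) ^ 2)
    (hcompl : ∀ i, u i * v i = 0)
    (α : ℝ)
    (hKT : ∀ i,
      (φ i < ω i → V * d i (ω i) + κ * q i = α) ∧
      (ω i = φ i →
        α ≤ V * d i (ω i) + κ * q i ∧ V * d i (ω i) + κ * q i ≤ α + V * g lam) ∧
      (0 < ω i ∧ ω i < φ i → V * d i (ω i) + κ * q i = α + V * g lam) ∧
      (ω i = 0 → α + V * g lam ≤ V * d i 0 + κ * q i)) :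
    ∀ p ∈ K, F (u, v) ≤ F p := by
  intro p hp
  subst hK hF hω hlam hd hg
  simp only [Set.mem_setOf_eq] at hmem hp
  obtain ⟨hu0, hv0, hwf, htl, hbal⟩ := hmem
  obtain ⟨ha0, hb0, hwf', htl', hbal'⟩ := hp
  simp only [] at hKT hu0 hv0 hwf htl hbal
  set a : Fin N → ℝ := p.1 with ha
  set b : Fin N → ℝ := p.2 with hb
  set c : Fin N → ℝ := fun i => V * (μ i / (μ i - (φ i + u i - v i)) ^ 2) + κ * q i with hc
  set γ : ℝ := V * (τ / (1 - τ * ∑ i, v i) ^ 2) with hγ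
  show (∑ i, (V * (φ i + u i - v i) / (μ i - (φ i + u i - v i)) +
          κ * q i * (φ i + u i - v i))) +
        V * τ * (∑ i, v i) / (1 - τ * (∑ i, v i)) ≤
      (∑ i, (V * (φ i + a i - b i) / (μ i - (φ i + a i - b i)) +
          κ * q i * (φ i + a i - b i))) +
        V * τ * (∑ i, b i) / (1 - τ * (∑ i, b i))
  have h1lam : 0 < 1 - τ * ∑ i, v i := by linarith
  have hγpos : 0 < γ := by rw [hγ]; positivity
  -- Step 1: per-coordinate convexity of the computation-delay term
  have step1 : ∀ i, (V * (φ i + u i - v i) / (μ i - (φ i + u i - v i)) +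
        κ * q i * (φ i + u i - v i)) +
        c i * ((φ i + a i - b i) - (φ i + u i - v i)) ≤
        V * (φ i + a i - b i) / (μ i - (φ i + a i - b i)) + κ * q i * (φ i + a i - b i) := by
    intro i
    have h := conv_grad2 V (κ * q i) (μ i) (φ i + a i - b i) (φ i + u i - v i)
      hV (mul_nonneg hκ.le (hq i)) (hμ i) (hwf' i).2 (hwf i).2
    simp only [hc]
    linarith
  have sum1 : (∑ i, (V * (φ i + u i - v i) / (μ i - (φ i + u i - v i)) +
        κ * q i * (φ i + u i - v i))) +
        ∑ i, c i * ((φ i + a i - b i) - (φ i + u i - v i)) ≤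
        ∑ i, (V * (φ i + a i - b i) / (μ i - (φ i + a i - b i)) +
          κ * q i * (φ i + a i - b i)) := by
    rw [← Finset.sum_add_distrib]
    exact Finset.sum_le_sum fun i _ => step1 i
  -- Step 2: convexity of the congestion term
  have step2 : V * τ * (∑ i, v i) / (1 - τ * ∑ i, v i) + γ * ((∑ i, b i) - ∑ i, v i) ≤
      V * τ * (∑ i, b i) / (1 - τ * ∑ i, b i) := by
    simp only [hγ]
    exact conv_grad_g V τ (∑ i, v i) (∑ i, b i) hV hτ htl htl'
  -- Step 3: nonnegativity of the linearized term at the KT point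
  have term_nonneg : ∀ i, 0 ≤ (c i - α) * (a i - u i) - (c i - α - γ) * (b i - v i) := by
    intro i
    have hKTi := hKT i
    have hai := ha0 i
    have hbi := hb0 i
    have hui := hu0 i
    have hvi := hv0 i
    have hωnn := (hwf i).1
    have hω'nn := (hwf' i).1
    rcases mul_eq_zero.mp (hcompl i) with hui0 | hvi0
    · -- u i = 0
      rcases eq_or_lt_of_le hvi with hvi0 | hvpos
      · -- v i = 0 too : ω i = φ i
        have hωφ : φ i + u i - v i = φ i := by rw [hui0, ← hvi0]; ring
        have hKT2 := hKTi.2.1 hωφ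
        have h1 : α ≤ c i := by simp only [hc]; exact hKT2.1
        have h2 : c i ≤ α + γ := by simp only [hc]; exact hKT2.2
        rw [hui0, ← hvi0]
        nlinarith [mul_nonneg (sub_nonneg.2 h1) hai, mul_nonneg (sub_nonneg.2 h2) hbi]
      · -- v i > 0, so ω i < φ i
        rcases eq_or_lt_of_le hωnn with hω0 | hωpos
        · -- ω i = 0
          have hKT4 := hKTi.2.2.2 hω0.symm
          have hci : α + γ ≤ c i := by
            have e : c i = V * (μ i / (μ i - 0) ^ 2) + κ * q i := by
              simp only [hc]; rw [← hω0]
            rw [e]; exact hKT4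
          have hdiff : b i - v i ≤ a i - u i := by
            have h := hω'nn
            linarith [hω0]
          have hβ : 0 ≤ c i - α - γ := by linarith
          have hau : 0 ≤ a i - u i := by rw [hui0]; simpa using hai
          nlinarith [mul_nonneg hβ (sub_nonneg.2 hdiff), mul_nonneg hγpos.le hau]
        · -- 0 < ω i < φ i
          have hωlt : φ i + u i - v i < φ i := by rw [hui0]; linarith
          have hKT3 := hKTi.2.2.1 ⟨hωpos, hωlt⟩
          have hci : c i = α + γ := by simp only [hc]; exact hKT3
          rw [hci, hui0]
          have e : (α + γ - α) * (a i - 0) - (α + γ - α - γ) * (b i - v i) = γ * a i := by ring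
          rw [e]
          positivity
    · -- v i = 0
      rcases eq_or_lt_of_le hui with hui0 | hupos
      · -- u i = 0 too
        have hωφ : φ i + u i - v i = φ i := by rw [← hui0, hvi0]; ring
        have hKT2 := hKTi.2.1 hωφ
        have h1 : α ≤ c i := by simp only [hc]; exact hKT2.1
        have h2 : c i ≤ α + γ := by simp only [hc]; exact hKT2.2
        rw [← hui0, hvi0]
        nlinarith [mul_nonneg (sub_nonneg.2 h1) hai, mul_nonneg (sub_nonneg.2 h2) hbi]
      · -- u i > 0 : ω i > φ i
        have hωgt : φ i < φ i + u i - v i := by rw [hvi0]; linarith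
        have hKT1 := hKTi.1 hωgt
        have hci : c i = α := by simp only [hc]; exact hKT1
        rw [hci, hvi0]
        have e : (α - α) * (a i - u i) - (α - α - γ) * (b i - 0) = γ * b i := by ring
        rw [e]
        positivity
  have hsum : ∑ i, ((c i - α) * (a i - u i) - (c i - α - γ) * (b i - v i))
      = (∑ i, c i * ((φ i + a i - b i) - (φ i + u i - v i)))
        - (α * ∑ i, a i - α * ∑ i, u i) + (α * ∑ i, b i - α * ∑ i, v i)
        + (γ * ∑ i, b i - γ * ∑ i, v i) := by
    simp only [mul_sub, mul_add, sub_mul, add_mul, Finset.mul_sum,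
      Finset.sum_sub_distrib, Finset.sum_add_distrib]
    ring
  have h0 : 0 ≤ ∑ i, ((c i - α) * (a i - u i) - (c i - α - γ) * (b i - v i)) :=
    Finset.sum_nonneg fun i _ => term_nonneg i
  rw [hsum, hbal, hbal'] at h0
  have step3 : 0 ≤ (∑ i, c i * ((φ i + a i - b i) - (φ i + u i - v i))) +
      γ * ((∑ i, b i) - ∑ i, v i) := by linarith
  linarith [sum1, step2, step3]
end

section
/- Let N ≥ 2, V > 0, κ > 0, τ > 0, φ_i ≥ 0, μ_i > 0, q_i ≥ 0 for i = 1,…,N. Let β ∈ ℝ^{N×N} be a feasible peer offloading profile, i.e., β_{ij} ≥ 0 for all i,j, Σ_j β_{ij} = φ_i for all i, ω_j(β) = Σ_i β_{ij} < μ_j for all j, and τ·λ(β) < 1 where λ(β) = Σ_i Σ_{j≠i} β_{ij}. Suppose there exist an index i and indices j ≠ i and k ≠ i with β_{ij} > 0 and β_{ki} > 0 (SBS i simultaneously offloads workload and receives workload). Then there exists a feasible profile β′ with ω_j(β′) = ω_j(β) for every j, λ(β′) < λ(β), and strictly smaller objective J(β′) < J(β), where J(β) = Σ_j V·ω_j(β)/(μ_j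 − ω_j(β)) + V·τ·λ(β)/(1 − τ·λ(β)) + Σ_j κ·q_j·ω_j(β). -/
/-- if in a feasible peer offloading profile some SBS `i` both
offloads workload (to some `j ≠ i`) and receives workload (from some `k ≠ i`),
then there is another feasible profile with the same post-offloading workloads,
strictly less LAN traffic, and strictly smaller per-slot objective. -/
theorem stmt_6 (N : ℕ) (hN : 2 ≤ N) (V κ τ : ℝ) (hV : 0 < V) (hκ : 0 < κ) (hτ : 0 < τ)
    (φ μ q : Fin N → ℝ) (hφ : ∀ i, 0 ≤ φ i) (hμ : ∀ i, 0 < μ i) (hq : ∀ i, 0 ≤ q i)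
    (β : Fin N → Fin N → ℝ)
    (hpos : ∀ i j, 0 ≤ β i j)
    (hcons : ∀ i, (∑ j, β i j) = φ i)
    (hstab : ∀ j, (∑ i, β i j) < μ j)
    (hlan : τ * (∑ i, ∑ j ∈ Finset.univ.erase i, β i j) < 1)
    (i j k : Fin N) (hji : j ≠ i) (hki : k ≠ i)
    (hβij : 0 < β i j) (hβki : 0 < β k i) :
    ∃ β' : Fin N → Fin N → ℝ,
      (∀ a b, 0 ≤ β' a b) ∧
      (∀ a, (∑ b, β' a b) = φ a) ∧
      (∀ b, (∑ a, β' a b) < μ b) ∧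
      τ * (∑ a, ∑ b ∈ Finset.univ.erase a, β' a b) < 1 ∧
      (∀ b, (∑ a, β' a b) = ∑ a, β a b) ∧
      (∑ a, ∑ b ∈ Finset.univ.erase a, β' a b) <
        (∑ a, ∑ b ∈ Finset.univ.erase a, β a b) ∧
      (∑ b, V * (∑ a, β' a b) / (μ b - ∑ a, β' a b)) +
          V * τ * (∑ a, ∑ b ∈ Finset.univ.erase a, β' a b) /
            (1 - τ * (∑ a, ∑ b ∈ Finset.univ.erase a, β' a b)) +
          (∑ b, κ * q b * (∑ a, β' a b)) <
        (∑ b, V * (∑ a, β a b) / (μ b - ∑ a, β a b)) +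
          V * τ * (∑ a, ∑ b ∈ Finset.univ.erase a, β a b) /
            (1 - τ * (∑ a, ∑ b ∈ Finset.univ.erase a, β a b)) +
          (∑ b, κ * q b * (∑ a, β a b)) := by
  set ε := min (β i j) (β k i) with hεdef
  have hε : 0 < ε := lt_min hβij hβki
  have hε1 : ε ≤ β i j := min_le_left _ _
  have hε2 : ε ≤ β k i := min_le_right _ _
  set β' : Fin N → Fin N → ℝ := fun a b =>
    β a b + (if a = i then (if b = i then ε else 0) - (if b = j then ε else 0) else 0)
          + (if a = k then (if b = j then ε else 0) - (if b = i then ε else 0) else 0)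
    with hβ'def
  -- nonnegativity
  have hik : i ≠ k := fun h => hki h.symm
  have hij : i ≠ j := fun h => hji h.symm
  have hpos' : ∀ a b, 0 ≤ β' a b := by
    intro a b
    simp only [hβ'def]
    by_cases hai : a = i
    · by_cases hbi : b = i
      · simp only [hai, hbi]
        simp [hij, hik, hji, hki] <;> linarith [hpos i i]
      · by_cases hbj : b = j
        · simp only [hai, hbj]
          simp [hji, hik] <;> linarith
        · simp only [hai]
          simp [hbi, hbj, hik] <;> linarith [hpos i b]
    · by_cases hak : a = k
      · by_cases hbi : b = i
        · simp only [hak, hbi]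
          simp [hki, hji, hij] <;> linarith
        · by_cases hbj : b = j
          · simp only [hak, hbj]
            simp [hki, hji, hij] <;> linarith [hpos k j, hε.le]
          · simp only [hak]
            simp [hki, hbi, hbj] <;> linarith [hpos k b]
      · simp [hai, hak] <;> linarith [hpos a b]
  -- row sums unchanged
  have hrow : ∀ a, (∑ b, β' a b) = ∑ b, β a b := by
    intro a
    simp only [hβ'def, Finset.sum_add_distrib]
    have h1 : ∀ c : Fin N, (∑ b : Fin N, if b = c then ε else 0) = ε := by
      intro c; simp
    by_cases hai : a = i <;> by_cases hak : a = k <;>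
      simp [hai, hak, Finset.sum_sub_distrib, h1]
  have hcons' : ∀ a, (∑ b, β' a b) = φ a := fun a => (hrow a).trans (hcons a)
  -- column sums unchanged
  have hcol : ∀ b, (∑ a, β' a b) = ∑ a, β a b := by
    intro b
    simp only [hβ'def, Finset.sum_add_distrib]
    have h1 : ∀ (c : Fin N) (x : ℝ), (∑ a : Fin N, if a = c then x else 0) = x := by
      intro c x; simp
    rw [h1, h1]
    ring
  have hstab' : ∀ b, (∑ a, β' a b) < μ b := fun b => (hcol b) ▸ hstab b
  -- lambda formula
  have hlam : ∀ f : Fin N → Fin N → ℝ,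
      (∑ a, ∑ b ∈ Finset.univ.erase a, f a b) = (∑ a, ∑ b, f a b) - ∑ a, f a a := by
    intro f
    rw [← Finset.sum_sub_distrib]
    exact Finset.sum_congr rfl fun a _ => Finset.sum_erase_eq_sub (Finset.mem_univ a)
  have hdiag : (∑ a, β' a a) = (∑ a, β a a) + ε + (if k = j then ε else 0) := by
    simp only [hβ'def, Finset.sum_add_distrib]
    have h1 : (∑ a : Fin N, if a = i then (if a = i then ε else 0) - (if a = j then ε else 0) else 0)
        = ε := by
      rw [Finset.sum_ite_eq' Finset.univ i]
      simp [hji.symm]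
    have h2 : (∑ a : Fin N, if a = k then (if a = j then ε else 0) - (if a = i then ε else 0) else 0)
        = if k = j then ε else 0 := by
      rw [Finset.sum_ite_eq' Finset.univ k]
      simp [hki]
    rw [h1, h2]
    try ring
  have htot : (∑ a, ∑ b, β' a b) = ∑ a, ∑ b, β a b :=
    Finset.sum_congr rfl fun a _ => hrow a
  have hlamlt : (∑ a, ∑ b ∈ Finset.univ.erase a, β' a b) <
      (∑ a, ∑ b ∈ Finset.univ.erase a, β a b) := by
    rw [hlam, hlam, htot, hdiag]
    have : (0:ℝ) ≤ if k = j then ε else 0 := by positivity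
    linarith
  set L := ∑ a, ∑ b ∈ Finset.univ.erase a, β a b
  set L' := ∑ a, ∑ b ∈ Finset.univ.erase a, β' a b
  have hτL : τ * L < 1 := hlan
  have hτL' : τ * L' < τ * L := by
    exact mul_lt_mul_of_pos_left hlamlt hτ
  have hlan' : τ * L' < 1 := hτL'.trans hτL
  refine ⟨β', hpos', hcons', hstab', hlan', hcol, hlamlt, ?_⟩
  have hs1 : (∑ b, V * (∑ a, β' a b) / (μ b - ∑ a, β' a b)) =
      ∑ b, V * (∑ a, β a b) / (μ b - ∑ a, β a b) :=
    Finset.sum_congr rfl fun b _ => by rw [hcol]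
  have hs3 : (∑ b, κ * q b * (∑ a, β' a b)) = ∑ b, κ * q b * (∑ a, β a b) :=
    Finset.sum_congr rfl fun b _ => by rw [hcol]
  rw [hs1, hs3]
  have hd1 : 0 < 1 - τ * L := by linarith
  have hd2 : 0 < 1 - τ * L' := by linarith
  have hmid : V * τ * L' / (1 - τ * L') < V * τ * L / (1 - τ * L) := by
    rw [div_lt_div_iff₀ hd2 hd1]
    nlinarith [mul_pos hV hτ]
  linarith
end

section
/- Let N ≥ 1, let B ⊆ ℝ^{N×N} be nonempty, and let c_{ij} : B → ℝ and c̃_{ij} : B → ℝ be given for all i, j ∈ {1,…,N}. Define C(β) = Σ_{i=1}^N Σ_{j=1}^N β_{ij}·c_{ij}(β). Suppose β^{NE} ∈ B satisfies the variational inequality Σ_{i,j} c̃_{ij}(β^{NE})·(β_{ij} − β^{NE}_{ij}) ≥ 0 for all β ∈ B, and suppose ρ ∈ [0, 1) satisfies, for every j ∈ {1,…,N} and every β, β̂ ∈ B, Σ_{i=1}^N [ (c̃_{ij}(β) − c_{ij}(β̂))·β̂_{ij} + (c_{ij}(β) − c̃_{ij}(β))·β_{ij} ] ≤ ρ·Σ_{i=1}^N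 β_{ij}·c_{ij}(β). Then for every β̂ ∈ B, C(β^{NE}) ≤ ρ·C(β^{NE}) + C(β̂); consequently C(β^{NE}) ≤ C(β̂)/(1 − ρ), and in particular the price of anarchy C(β^{NE})/C(β*) for the system-optimal β* ∈ B is at most 1/(1 − ρ) whenever C(β*) > 0. -/
/-- bound on the price of anarchy of the peer offloading game
(Theorem 5 of the paper): if the Nash equilibrium satisfies the variational
inequality and `ρ ∈ [0,1)` satisfies the column-wise smoothness condition, then
`C(β^NE) ≤ ρ·C(β^NE) + C(β̂)` for every `β̂ ∈ B`, hence
`C(β^NE) ≤ C(β̂)/(1−ρ)` and the price of anarchy is at most `1/(1−ρ)`. -/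
theorem stmt_12 (N : ℕ) (hN : 1 ≤ N)
    (B : Set (Fin N → Fin N → ℝ)) (hBne : B.Nonempty)
    (c ctilde : Fin N → Fin N → (Fin N → Fin N → ℝ) → ℝ)
    (Cost : (Fin N → Fin N → ℝ) → ℝ)
    (hCost : Cost = fun β => ∑ i, ∑ j, β i j * c i j β)
    (βNE : Fin N → Fin N → ℝ) (hNE : βNE ∈ B)
    (hVI : ∀ β ∈ B, 0 ≤ ∑ i, ∑ j, ctilde i j βNE * (β i j - βNE i j))
    (ρ : ℝ) (hρ0 : 0 ≤ ρ) (hρ1 : ρ < 1)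
    (hρ : ∀ j, ∀ β ∈ B, ∀ βhat ∈ B,
      (∑ i, ((ctilde i j β - c i j βhat) * βhat i j +
             (c i j β - ctilde i j β) * β i j)) ≤
        ρ * ∑ i, β i j * c i j β) :
    (∀ βhat ∈ B, Cost βNE ≤ ρ * Cost βNE + Cost βhat) ∧
    (∀ βhat ∈ B, Cost βNE ≤ Cost βhat / (1 - ρ)) ∧
    (∀ βstar ∈ B, (∀ β ∈ B, Cost βstar ≤ Cost β) → 0 < Cost βstar →
      Cost βNE / Cost βstar ≤ 1 / (1 - ρ)) := by

  have h1ρ : (0:ℝ) < 1 - ρ := by linarith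
  have key : ∀ βhat ∈ B, Cost βNE ≤ ρ * Cost βNE + Cost βhat := by
    intro βhat hβhat
    subst hCost
    simp only
    have hvi := hVI βhat hβhat
    have h2 : ∑ j, ∑ i, ((ctilde i j βNE - c i j βhat) * βhat i j +
        (c i j βNE - ctilde i j βNE) * βNE i j) ≤
        ∑ j, ρ * ∑ i, βNE i j * c i j βNE :=
      Finset.sum_le_sum (fun j _ => hρ j βNE hNE βhat hβhat)
    have e1 : ∑ j, ∑ i, ((ctilde i j βNE - c i j βhat) * βhat i j +
        (c i j βNE - ctilde i j βNE) * βNE i j)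
        = (∑ i, ∑ j, ctilde i j βNE * (βhat i j - βNE i j))
          + ((∑ i, ∑ j, βNE i j * c i j βNE) - ∑ i, ∑ j, βhat i j * c i j βhat) := by
      rw [Finset.sum_comm]
      rw [← Finset.sum_sub_distrib, ← Finset.sum_add_distrib]
      refine Finset.sum_congr rfl (fun i _ => ?_)
      rw [← Finset.sum_sub_distrib, ← Finset.sum_add_distrib]
      refine Finset.sum_congr rfl (fun j _ => ?_)
      ring
    have e2 : ∑ j, ρ * ∑ i, βNE i j * c i j βNE
        = ρ * ∑ i, ∑ j, βNE i j * c i j βNE := by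
      rw [← Finset.mul_sum, Finset.sum_comm]
    rw [e1, e2] at h2
    linarith
  refine ⟨key, ?_, ?_⟩
  · intro βhat hβhat
    have := key βhat hβhat
    rw [le_div_iff₀ h1ρ]
    linarith
  · intro βstar hβstar _ hpos
    have h := key βstar hβstar
    rw [div_le_div_iff₀ hpos h1ρ]
    linarith
end

section
/- Let N ≥ 1, V > 0, E_max ∈ ℝ, D^{opt} ∈ ℝ, and for i = 1,…,N let Ē_i ∈ ℝ. Let E_i : ℕ → ℝ and D : ℕ → ℝ be sequences, and define queues q_i : ℕ → ℝ by q_i(0) = 0 and q_i(t+1) = max(q_i(t) + E_i(t) − Ē_i, 0). Assume: (i) (E_i(t) − Ē_i)² ≤ (E_max − Ē_i)² for all i, t; and (ii) for every t, V·D(t) + Σ_{i=1}^N q_i(t)·(E_i(t) − Ē_i) ≤ V·D^{opt}. Then for every T ≥ 1, (1/T)·Σ_{t=0}^{T−1} D(t) ≤ D^{opt} + B/V, where B = (1/2)·Σ_{i=1}^N (E_max − Ē_i)². -/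
/-- deterministic core of Theorem 2's delay bound for OPEN: if the
per-slot drift-plus-penalty value is dominated by a comparison policy with
system delay `D^opt` and no energy surplus, then the time-averaged system delay
is within `B/V` of `D^opt`. -/
theorem stmt_13 (N : ℕ) (hN : 1 ≤ N) (V : ℝ) (hV : 0 < V) (Emax Dopt : ℝ)
    (Ebar : Fin N → ℝ) (E : Fin N → ℕ → ℝ) (D : ℕ → ℝ)
    (q : Fin N → ℕ → ℝ)
    (hq0 : ∀ i, q i 0 = 0)
    (hqrec : ∀ i t, q i (t + 1) = max (q i t + E i t - Ebar i) 0)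
    (hE : ∀ i t, (E i t - Ebar i) ^ 2 ≤ (Emax - Ebar i) ^ 2)
    (hdp : ∀ t, V * D t + (∑ i, q i t * (E i t - Ebar i)) ≤ V * Dopt) :
    ∀ T : ℕ, 1 ≤ T →
      (∑ t ∈ Finset.range T, D t) / (T : ℝ) ≤
        Dopt + ((1 / 2) * ∑ i, (Emax - Ebar i) ^ 2) / V := by
  intro T hT
  set B : ℝ := (1 / 2) * ∑ i, (Emax - Ebar i) ^ 2 with hB
  have hTpos : (0 : ℝ) < T := by exact_mod_cast hT
  -- key per-slot drift bound
  have hdrift : ∀ i t, (q i (t + 1)) ^ 2 - (q i t) ^ 2 - (Emax - Ebar i) ^ 2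
      ≤ 2 * (q i t * (E i t - Ebar i)) := by
    intro i t
    have h1 : (q i (t + 1)) ^ 2 ≤ (q i t + E i t - Ebar i) ^ 2 := by
      rw [hqrec i t]
      rcases le_or_gt (q i t + E i t - Ebar i) 0 with h | h
      · rw [max_eq_right h]; simpa using sq_nonneg (q i t + E i t - Ebar i)
      · rw [max_eq_left h.le]
    have h2 := hE i t
    nlinarith [h1, h2]
  -- sum over i and t, telescope
  have hsum : ∀ t, (∑ i, (q i (t + 1)) ^ 2) - (∑ i, (q i t) ^ 2) - 2 * B
      ≤ 2 * ∑ i, q i t * (E i t - Ebar i) := by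
    intro t
    have := Finset.sum_le_sum (fun i (_ : i ∈ Finset.univ) => hdrift i t)
    have h2B : 2 * B = ∑ i : Fin N, (Emax - Ebar i) ^ 2 := by
      rw [hB]; ring
    simp only [Finset.sum_sub_distrib, Finset.mul_sum] at this ⊢
    linarith [this, h2B ▸ (le_refl (2 * B))]
  -- per-slot delay bound
  have hslot : ∀ t, V * D t ≤ V * Dopt + B
      - (1/2) * ((∑ i, (q i (t + 1)) ^ 2) - (∑ i, (q i t) ^ 2)) := by
    intro t
    have h1 := hdp t
    have h2 := hsum t
    linarith
  have htel : ∑ t ∈ Finset.range T, ((∑ i, (q i (t + 1)) ^ 2) - (∑ i, (q i t) ^ 2))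
      = (∑ i, (q i T) ^ 2) - (∑ i, (q i 0) ^ 2) :=
    Finset.sum_range_sub (fun t => ∑ i, (q i t) ^ 2) T
  have hq0' : (∑ i : Fin N, (q i 0) ^ 2) = 0 := by
    simp [hq0]
  have hqT : 0 ≤ ∑ i : Fin N, (q i T) ^ 2 := by positivity
  have hsumD : V * ∑ t ∈ Finset.range T, D t ≤ T * (V * Dopt + B) := by
    have := Finset.sum_le_sum (fun t (_ : t ∈ Finset.range T) => hslot t)
    rw [← Finset.mul_sum] at this
    simp only [Finset.sum_sub_distrib, Finset.sum_add_distrib, Finset.sum_const,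
      Finset.card_range, nsmul_eq_mul] at this
    rw [← Finset.mul_sum, htel, hq0'] at this
    nlinarith
  rw [div_le_iff₀ hTpos]
  have : Dopt + B / V = (V * Dopt + B) / V := by field_simp
  rw [this, div_mul_eq_mul_div, le_div_iff₀ hV]
  nlinarith [hsumD]
end

section
/- Let N ≥ 1, V > 0, ε > 0, E_max ∈ ℝ, Ψ ∈ ℝ, D_{lb} ∈ ℝ, and for i = 1,…,N let Ē_i ∈ ℝ. Let E_i : ℕ → ℝ and D : ℕ → ℝ be sequences with D(t) ≥ D_{lb} for all t, and define queues q_i : ℕ → ℝ by q_i(0) = 0 and q_i(t+1) = max(q_i(t) + E_i(t) − Ē_i, 0). Assume: (i) (E_i(t) − Ē_i)² ≤ (E_max − Ē_i)² for all i, t; and (ii) for every t, V·D(t) + Σ_{i=1}^N q_i(t)·(E_i(t) − Ē_i) ≤ V·Ψ − ε·Σ_{i=1}^N q_i(t). Then for every T ≥ 1, (1/T)·Σ_{t=0}^{T−1} Σ_{i=1}^N q_i(t) ≤ (B + V·(Ψ − D_{lb}))/ε, where B = (1/2)·Σ_{i=1}^N (E_max − Ē_i)². -/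
/-- deterministic core of Theorem 2's energy deficit bound for
OPEN: if the per-slot drift-plus-penalty value is dominated by a comparison
policy with system delay `Ψ` and per-slot energy surplus `ε` at each SBS, then
the time-averaged total energy deficit is at most `(B + V(Ψ − D_lb))/ε`. -/
theorem stmt_14 (N : ℕ) (hN : 1 ≤ N) (V ε : ℝ) (hV : 0 < V) (hε : 0 < ε)
    (Emax Ψ Dlb : ℝ) (Ebar : Fin N → ℝ) (E : Fin N → ℕ → ℝ) (D : ℕ → ℝ)
    (hD : ∀ t, Dlb ≤ D t)
    (q : Fin N → ℕ → ℝ)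
    (hq0 : ∀ i, q i 0 = 0)
    (hqrec : ∀ i t, q i (t + 1) = max (q i t + E i t - Ebar i) 0)
    (hE : ∀ i t, (E i t - Ebar i) ^ 2 ≤ (Emax - Ebar i) ^ 2)
    (hdp : ∀ t, V * D t + (∑ i, q i t * (E i t - Ebar i)) ≤
      V * Ψ - ε * ∑ i, q i t) :
    ∀ T : ℕ, 1 ≤ T →
      (∑ t ∈ Finset.range T, ∑ i, q i t) / (T : ℝ) ≤
        (((1 / 2) * ∑ i, (Emax - Ebar i) ^ 2) + V * (Ψ - Dlb)) / ε := by
  intro T hT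
  set B : ℝ := (1 / 2) * ∑ i, (Emax - Ebar i) ^ 2 with hB
  set L : ℕ → ℝ := fun t => (1 / 2) * ∑ i, q i t ^ 2 with hL
  -- per-slot drift bound
  have key : ∀ t, ε * ∑ i, q i t ≤ B + V * (Ψ - Dlb) + (L t - L (t + 1)) := by
    intro t
    have h1 : ∀ i, q i (t + 1) ^ 2 ≤ (q i t + E i t - Ebar i) ^ 2 := by
      intro i
      rw [hqrec i t]
      rcases le_or_gt 0 (q i t + E i t - Ebar i) with h | h
      · rw [max_eq_left h]
      · rw [max_eq_right h.le]
        simpa using sq_nonneg (q i t + E i t - Ebar i)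
    have h2 : ∀ i, (1 / 2) * q i (t + 1) ^ 2 - (1 / 2) * q i t ^ 2 ≤
        q i t * (E i t - Ebar i) + (1 / 2) * (Emax - Ebar i) ^ 2 := by
      intro i
      have := h1 i
      have h3 := hE i t
      nlinarith [sq_nonneg (q i t + E i t - Ebar i)]
    have hsum : L (t + 1) - L t ≤
        (∑ i, q i t * (E i t - Ebar i)) + B := by
      simp only [hL, hB, Finset.mul_sum, ← Finset.sum_sub_distrib, ← Finset.sum_add_distrib]
      exact Finset.sum_le_sum fun i _ => h2 i
    have hdpt := hdp t
    have hDt := hD t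
    nlinarith
  -- telescope
  have tel : ε * ∑ t ∈ Finset.range T, ∑ i, q i t ≤
      (T : ℝ) * (B + V * (Ψ - Dlb)) + (L 0 - L T) := by
    have : ∑ t ∈ Finset.range T, (ε * ∑ i, q i t)
        ≤ ∑ t ∈ Finset.range T, (B + V * (Ψ - Dlb) + (L t - L (t + 1))) := by
      exact Finset.sum_le_sum fun t _ => key t
    calc ε * ∑ t ∈ Finset.range T, ∑ i, q i t
        = ∑ t ∈ Finset.range T, (ε * ∑ i, q i t) := by rw [Finset.mul_sum]
      _ ≤ ∑ t ∈ Finset.range T, (B + V * (Ψ - Dlb) + (L t - L (t + 1))) := this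
      _ = (T : ℝ) * (B + V * (Ψ - Dlb)) + (L 0 - L T) := by
          rw [Finset.sum_add_distrib, Finset.sum_const, Finset.card_range,
            Finset.sum_range_sub' (fun t => L t)]
          ring
    
  have hL0 : L 0 = 0 := by simp [hL, hq0]
  have hLT : 0 ≤ L T := by
    have : ∀ i ∈ Finset.univ, (0:ℝ) ≤ q i T ^ 2 := fun i _ => sq_nonneg _
    simp only [hL]
    positivity
  have hTpos : (0:ℝ) < T := by exact_mod_cast hT
  rw [div_le_div_iff₀ hTpos hε]
  nlinarith [tel]
end

section
/- Let N ≥ 1, V > 0, ϱ ≥ 1, E_max ∈ ℝ, Ψ ∈ ℝ, and for i = 1,…,N let Ē_i ≥ 0 with Ē^{max} = max_i Ē_i. Let E_i : ℕ → ℝ and D : ℕ → ℝ be sequences, and define q_i : ℕ → ℝ by q_i(0) = 0 and q_i(t+1) = max(q_i(t) + E_i(t) − Ē_i, 0). Assume: (i) (E_i(t) − Ē_i)² ≤ (E_max − Ē_i)² for all i, t; and (ii) for every t there exist comparison values D^L(t) ≤ Ψ and E^L_i(t) ≤ Ē_i − ((ϱ−1)/ϱ)·Ē^{max} such that V·D(t)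 + Σ_{i=1}^N q_i(t)·E_i(t) ≤ ϱ·( V·D^L(t) + Σ_{i=1}^N q_i(t)·E^L_i(t) ). Then for every T ≥ 1, (1/T)·Σ_{t=0}^{T−1} D(t) ≤ ϱ·Ψ + B/V, where B = (1/2)·Σ_{i=1}^N (E_max − Ē_i)². -/
/-- deterministic core of Theorem 6's delay bound for
OPEN-Autonomous: if in each slot the Nash equilibrium's drift-plus-penalty value
is at most `ϱ` times that of a comparison policy with delay at most `Ψ` and
per-slot energy at most `Ē_i − ((ϱ−1)/ϱ)·Ē^max`, then the time-averaged system
delay is at most `ϱ·Ψ + B/V`. -/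
theorem stmt_15 (N : ℕ) (hN : 1 ≤ N) (V ϱ : ℝ) (hV : 0 < V) (hϱ : 1 ≤ ϱ)
    (Emax Ψ : ℝ) (Ebar : Fin N → ℝ) (hEbar : ∀ i, 0 ≤ Ebar i)
    (Ebarmax : ℝ) (hEbarmax : IsGreatest (Set.range Ebar) Ebarmax)
    (E : Fin N → ℕ → ℝ) (D : ℕ → ℝ)
    (q : Fin N → ℕ → ℝ)
    (hq0 : ∀ i, q i 0 = 0)
    (hqrec : ∀ i t, q i (t + 1) = max (q i t + E i t - Ebar i) 0)
    (hE : ∀ i t, (E i t - Ebar i) ^ 2 ≤ (Emax - Ebar i) ^ 2)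
    (hdp : ∀ t, ∃ (DL : ℝ) (EL : Fin N → ℝ),
      DL ≤ Ψ ∧
      (∀ i, EL i ≤ Ebar i - ((ϱ - 1) / ϱ) * Ebarmax) ∧
      V * D t + (∑ i, q i t * E i t) ≤ ϱ * (V * DL + ∑ i, q i t * EL i)) :
    ∀ T : ℕ, 1 ≤ T →
      (∑ t ∈ Finset.range T, D t) / (T : ℝ) ≤
        ϱ * Ψ + ((1 / 2) * ∑ i, (Emax - Ebar i) ^ 2) / V := by
  have hϱ0 : (0:ℝ) < ϱ := lt_of_lt_of_le one_pos hϱ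
  -- nonnegativity of queues
  have hqpos : ∀ t i, 0 ≤ q i t := by
    intro t
    induction t with
    | zero => intro i; rw [hq0 i]
    | succ t ih => intro i; rw [hqrec i t]; exact le_max_right _ _
  set B : ℝ := (1/2) * ∑ i, (Emax - Ebar i) ^ 2 with hB
  set L : ℕ → ℝ := fun t => ∑ i, q i t ^ 2 / 2 with hL
  -- per-slot bound
  have step : ∀ t, V * D t + (L (t+1) - L t) ≤ ϱ * V * Ψ + B := by
    intro t
    obtain ⟨DL, EL, hDL, hEL, hkey⟩ := hdp t
    -- drift bound
    have drift : L (t+1) - L t ≤ (∑ i, q i t * (E i t - Ebar i)) + B := by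
      have h1 : ∀ i : Fin N, q i (t+1) ^ 2 / 2 - q i t ^ 2 / 2 ≤
          q i t * (E i t - Ebar i) + (Emax - Ebar i) ^ 2 / 2 := by
        intro i
        have h2 : q i (t+1) ^ 2 ≤ (q i t + E i t - Ebar i) ^ 2 := by
          rw [hqrec i t]
          rcases le_or_gt 0 (q i t + E i t - Ebar i) with h | h
          · rw [max_eq_left h]
          · rw [max_eq_right h.le]; nlinarith [sq_nonneg (q i t + E i t - Ebar i)]
        nlinarith [hE i t]
      calc L (t+1) - L t = ∑ i, (q i (t+1) ^ 2 / 2 - q i t ^ 2 / 2) := by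
            simp [hL, Finset.sum_sub_distrib]
        _ ≤ ∑ i, (q i t * (E i t - Ebar i) + (Emax - Ebar i) ^ 2 / 2) :=
            Finset.sum_le_sum (fun i _ => h1 i)
        _ = (∑ i, q i t * (E i t - Ebar i)) + B := by
            rw [Finset.sum_add_distrib, hB, Finset.mul_sum]
            congr 1
            exact Finset.sum_congr rfl fun i _ => by ring
    -- queue term bound: ϱ * ∑ q EL ≤ ∑ q Ebar
    have hqterm : ϱ * (∑ i, q i t * EL i) ≤ ∑ i, q i t * Ebar i := by
      rw [Finset.mul_sum]
      apply Finset.sum_le_sum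
      intro i _
      have hle : EL i ≤ Ebar i - ((ϱ - 1) / ϱ) * Ebarmax := hEL i
      have hEbm : Ebar i ≤ Ebarmax := hEbarmax.2 ⟨i, rfl⟩
      have hq := hqpos t i
      have h3 : ϱ * (q i t * EL i) ≤ q i t * (ϱ * Ebar i - (ϱ - 1) * Ebarmax) := by
        have : ϱ * (Ebar i - ((ϱ - 1) / ϱ) * Ebarmax) = ϱ * Ebar i - (ϱ - 1) * Ebarmax := by
          field_simp
        nlinarith [mul_le_mul_of_nonneg_left hle hq]
      nlinarith [mul_le_mul_of_nonneg_left hEbm hq]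
    have hVΨ : ϱ * (V * DL) ≤ ϱ * V * Ψ := by
      have := mul_le_mul_of_nonneg_left hDL hV.le
      nlinarith
    have hsplit : ∑ i, q i t * (E i t - Ebar i)
        = (∑ i, q i t * E i t) - ∑ i, q i t * Ebar i := by
      rw [← Finset.sum_sub_distrib]; congr 1; ext i; ring
    have hkey' : V * D t + (∑ i, q i t * E i t)
        ≤ ϱ * (V * DL) + ϱ * (∑ i, q i t * EL i) := by
      rw [← mul_add]; exact hkey
    linarith [drift]
  -- sum over t < T
  intro T hT
  have hTpos : (0:ℝ) < T := by exact_mod_cast hT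
  have hsum : (∑ t ∈ Finset.range T, (V * D t + (L (t+1) - L t)))
      ≤ T * (ϱ * V * Ψ + B) := by
    calc (∑ t ∈ Finset.range T, (V * D t + (L (t+1) - L t)))
        ≤ ∑ t ∈ Finset.range T, (ϱ * V * Ψ + B) :=
          Finset.sum_le_sum (fun t _ => step t)
      _ = T * (ϱ * V * Ψ + B) := by rw [Finset.sum_const, Finset.card_range]; ring
  have htel : (∑ t ∈ Finset.range T, (L (t+1) - L t)) = L T - L 0 :=
    Finset.sum_range_sub L T
  have hL0 : L 0 = 0 := by simp [hL, hq0]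
  have hLT : 0 ≤ L T := by
    apply Finset.sum_nonneg; intro i _; positivity
  have hsum2 : V * (∑ t ∈ Finset.range T, D t) ≤ T * (ϱ * V * Ψ + B) := by
    have : (∑ t ∈ Finset.range T, (V * D t + (L (t+1) - L t)))
        = V * (∑ t ∈ Finset.range T, D t) + (L T - L 0) := by
      rw [Finset.sum_add_distrib, htel, ← Finset.mul_sum]
    linarith
  rw [div_le_iff₀ hTpos]
  have hBV : B / V * V = B := div_mul_cancel₀ B (ne_of_gt hV)
  nlinarith [hsum2, hTpos]
end

section
/- Let N ≥ 1, V > 0, ϱ ≥ 1, ε > 0, E_max ∈ ℝ, Ψ̃ ∈ ℝ, D_{lb} ∈ ℝ, and for i = 1,…,N let Ē_i ≥ 0 with Ē^{max} = max_i Ē_i, and assume ϱ·ε − (ϱ−1)·Ē^{max} > 0. Let E_i : ℕ → ℝ and D : ℕ → ℝ be sequences with D(t) ≥ D_{lb} for all t, and define q_i : ℕ → ℝ by q_i(0) = 0 and q_i(t+1) = max(q_i(t) + E_i(t) − Ē_i, 0). Assume: (i) (E_i(t) − Ē_i)² ≤ (E_max − Ē_i)² for all i, t; and (ii) for every t there exist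 comparison values D^L(t) ≤ Ψ̃ and E^L_i(t) ≤ Ē_i − ε such that V·D(t) + Σ_{i=1}^N q_i(t)·E_i(t) ≤ ϱ·( V·D^L(t) + Σ_{i=1}^N q_i(t)·E^L_i(t) ). Then for every T ≥ 1, (1/T)·Σ_{t=0}^{T−1} Σ_{i=1}^N q_i(t) ≤ (B + V·(ϱ·Ψ̃ − D_{lb}))/(ϱ·ε − (ϱ−1)·Ē^{max}), where B = (1/2)·Σ_{i=1}^N (E_max − Ē_i)². -/
/-- deterministic core of Theorem 6's energy deficit bound for
OPEN-Autonomous: under a per-slot price-of-anarchy bound `ϱ` relative to a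
comparison policy with delay at most `Ψ̃` and per-slot energy surplus `ε`, the
time-averaged total energy deficit is at most
`(B + V(ϱ·Ψ̃ − D_lb))/(ϱ·ε − (ϱ−1)·Ē^max)`. -/
theorem stmt_16 (N : ℕ) (hN : 1 ≤ N) (V ϱ ε : ℝ) (hV : 0 < V) (hϱ : 1 ≤ ϱ)
    (hε : 0 < ε) (Emax Ψ Dlb : ℝ)
    (Ebar : Fin N → ℝ) (hEbar : ∀ i, 0 ≤ Ebar i)
    (Ebarmax : ℝ) (hEbarmax : IsGreatest (Set.range Ebar) Ebarmax)
    (hden : 0 < ϱ * ε - (ϱ - 1) * Ebarmax)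
    (E : Fin N → ℕ → ℝ) (D : ℕ → ℝ) (hD : ∀ t, Dlb ≤ D t)
    (q : Fin N → ℕ → ℝ)
    (hq0 : ∀ i, q i 0 = 0)
    (hqrec : ∀ i t, q i (t + 1) = max (q i t + E i t - Ebar i) 0)
    (hE : ∀ i t, (E i t - Ebar i) ^ 2 ≤ (Emax - Ebar i) ^ 2)
    (hdp : ∀ t, ∃ (DL : ℝ) (EL : Fin N → ℝ),
      DL ≤ Ψ ∧
      (∀ i, EL i ≤ Ebar i - ε) ∧
      V * D t + (∑ i, q i t * E i t) ≤ ϱ * (V * DL + ∑ i, q i t * EL i)) :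
    ∀ T : ℕ, 1 ≤ T →
      (∑ t ∈ Finset.range T, ∑ i, q i t) / (T : ℝ) ≤
        (((1 / 2) * ∑ i, (Emax - Ebar i) ^ 2) + V * (ϱ * Ψ - Dlb)) /
          (ϱ * ε - (ϱ - 1) * Ebarmax) := by
  have hq : ∀ i t, 0 ≤ q i t := by
    intro i t
    induction t with
    | zero => rw [hq0]
    | succ n ih => rw [hqrec]; exact le_max_right _ _
  have key : ∀ t, (ϱ * ε - (ϱ - 1) * Ebarmax) * ∑ i, q i t ≤
      ((1/2 : ℝ) * ∑ i, (Emax - Ebar i) ^ 2) + V * (ϱ * Ψ - Dlb) +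
        ((1/2 : ℝ) * ∑ i, (q i t) ^ 2 - (1/2 : ℝ) * ∑ i, (q i (t+1)) ^ 2) := by
    intro t
    obtain ⟨DL, EL, hDL, hEL, hdpt⟩ := hdp t
    have h1 : ∀ i ∈ Finset.univ, (q i (t+1)) ^ 2 ≤
        (q i t) ^ 2 + (Emax - Ebar i) ^ 2 + 2 * (q i t * E i t - q i t * Ebar i) := by
      intro i _
      have h2 : (q i (t+1)) ^ 2 ≤ (q i t + E i t - Ebar i) ^ 2 := by
        rw [hqrec]
        rcases le_or_gt (q i t + E i t - Ebar i) 0 with h | h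
        · rw [max_eq_right h]; simpa using sq_nonneg (q i t + E i t - Ebar i)
        · rw [max_eq_left h.le]
      nlinarith [hE i t]
    have hsum := Finset.sum_le_sum h1
    simp only [Finset.sum_add_distrib, ← Finset.mul_sum, Finset.sum_sub_distrib] at hsum
    have h3 : ∀ i ∈ Finset.univ, ϱ * (q i t * EL i) - q i t * Ebar i ≤
        -((ϱ * ε - (ϱ - 1) * Ebarmax) * q i t) := by
      intro i _
      have hb : Ebar i ≤ Ebarmax := hEbarmax.2 (Set.mem_range_self i)
      have hq' := hq i t
      have hEL' := hEL i
      have h5 : ϱ * (q i t * EL i) ≤ ϱ * (q i t * (Ebar i - ε)) := by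
        apply mul_le_mul_of_nonneg_left _ (by linarith)
        exact mul_le_mul_of_nonneg_left hEL' hq'
      have hc : ((ϱ - 1) * q i t) * Ebar i ≤ ((ϱ - 1) * q i t) * Ebarmax :=
        mul_le_mul_of_nonneg_left hb (mul_nonneg (by linarith) hq')
      nlinarith [h5, hc]
    have hsum3 := Finset.sum_le_sum h3
    simp only [Finset.sum_sub_distrib, ← Finset.mul_sum, Finset.sum_neg_distrib] at hsum3
    have h4 : V * D t + ∑ i, q i t * E i t ≤
        ϱ * V * Ψ + ϱ * ∑ i, q i t * EL i := by
      nlinarith [mul_le_mul_of_nonneg_left hDL (by positivity : (0:ℝ) ≤ ϱ * V)]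
    have hVD : V * Dlb ≤ V * D t := mul_le_mul_of_nonneg_left (hD t) hV.le
    nlinarith [hsum, hsum3, h4, hVD]
  intro T hT
  have hTpos : (0:ℝ) < (T:ℝ) := by exact_mod_cast Nat.lt_of_lt_of_le Nat.zero_lt_one hT
  have hsumT : (ϱ * ε - (ϱ - 1) * Ebarmax) * ∑ t ∈ Finset.range T, ∑ i, q i t ≤
      (T:ℝ) * (((1/2 : ℝ) * ∑ i, (Emax - Ebar i) ^ 2) + V * (ϱ * Ψ - Dlb)) := by
    rw [Finset.mul_sum]
    have htel := Finset.sum_range_sub' (fun t => (1/2 : ℝ) * ∑ i, (q i t) ^ 2) T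
    calc ∑ t ∈ Finset.range T, (ϱ * ε - (ϱ - 1) * Ebarmax) * ∑ i, q i t
        ≤ ∑ t ∈ Finset.range T, (((1/2 : ℝ) * ∑ i, (Emax - Ebar i) ^ 2) + V * (ϱ * Ψ - Dlb) +
            ((1/2 : ℝ) * ∑ i, (q i t) ^ 2 - (1/2 : ℝ) * ∑ i, (q i (t+1)) ^ 2)) :=
          Finset.sum_le_sum (fun t _ => key t)
      _ = (T:ℝ) * (((1/2 : ℝ) * ∑ i, (Emax - Ebar i) ^ 2) + V * (ϱ * Ψ - Dlb)) +
            ((1/2 : ℝ) * ∑ i, (q i 0) ^ 2 - (1/2 : ℝ) * ∑ i, (q i T) ^ 2) := by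
          rw [Finset.sum_add_distrib, Finset.sum_const, Finset.card_range, htel]
          push_cast
          ring
      _ ≤ (T:ℝ) * (((1/2 : ℝ) * ∑ i, (Emax - Ebar i) ^ 2) + V * (ϱ * Ψ - Dlb)) := by
          have h0 : (1/2 : ℝ) * ∑ i, (q i 0) ^ 2 = 0 := by simp [hq0]
          have hT' : 0 ≤ (1/2 : ℝ) * ∑ i, (q i T) ^ 2 := by positivity
          linarith
  rw [div_le_div_iff₀ hTpos hden]
  nlinarith [hsumT]
end

section
/- Let N ≥ 1, V > 0, κ > 0, τ > 0, φ_i ≥ 0, μ_i > 0, q_i ≥ 0 for i = 1,…,N, and let β ∈ ℝ^{N×N} satisfy β_{ij} ≥ 0, Σ_j β_{ij} = φ_i for all i, ω_j(β) = Σ_i β_{ij} < μ_j for all j, and τ·λ(β) < 1 where λ(β) = Σ_i Σ_{j≠i} β_{ij} and λ_i(β) = Σ_{j≠i} β_{ij} = φ_i − β_{ii}. Then Σ_{i=1}^N [ V·Σ_{j=1}^N β_{ij}/(μ_j − ω_j(β)) + V·τ·λ_i(β)/(1 − τ·λ(β)) + κ·q_i·ω_i(β) ] = Σ_{j=1}^N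 V·ω_j(β)/(μ_j − ω_j(β)) + V·τ·λ(β)/(1 − τ·λ(β)) + Σ_{j=1}^N κ·q_j·ω_j(β). In particular, the decision-dependent part of the per-slot objective depends on β only through the post-offloading workloads (ω_1(β),…,ω_N(β)) and the total LAN traffic λ(β), so any two feasible profiles with equal ω and λ have equal objective value. -/
lemma key17 (N : ℕ) (V κ τ : ℝ) (μ q : Fin N → ℝ) (β : Fin N → Fin N → ℝ) :
    (∑ i, (V * (∑ j, β i j / (μ j - ∑ k, β k j)) +
           V * τ * (∑ j ∈ Finset.univ.erase i, β i j) /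
             (1 - τ * (∑ k, ∑ l ∈ Finset.univ.erase k, β k l)) +
           κ * q i * (∑ k, β k i))) =
      (∑ j, V * (∑ k, β k j) / (μ j - ∑ k, β k j)) +
        V * τ * (∑ k, ∑ l ∈ Finset.univ.erase k, β k l) /
          (1 - τ * (∑ k, ∑ l ∈ Finset.univ.erase k, β k l)) +
        (∑ j, κ * q j * (∑ k, β k j)) := by
  rw [Finset.sum_add_distrib, Finset.sum_add_distrib]
  congr 1
  congr 1
  · rw [← Finset.mul_sum, Finset.sum_comm]
    simp [Finset.mul_sum, Finset.sum_div, mul_div_assoc]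
  · rw [← Finset.sum_div, ← Finset.mul_sum]


/-- the rearrangement identity (equation (10) of the paper): the
decision-dependent part of the per-slot objective, written as a sum of per-SBS
costs, equals a function of the post-offloading workloads `ω_j(β)` and the
total LAN traffic `λ(β)` only; hence any two feasible profiles with equal `ω`
and `λ` have equal objective value. -/
theorem stmt_17 (N : ℕ) (hN : 1 ≤ N) (V κ τ : ℝ) (hV : 0 < V) (hκ : 0 < κ) (hτ : 0 < τ)
    (φ μ q : Fin N → ℝ) (hφ : ∀ i, 0 ≤ φ i) (hμ : ∀ i, 0 < μ i) (hq : ∀ i, 0 ≤ q i)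
    (β : Fin N → Fin N → ℝ)
    (hpos : ∀ i j, 0 ≤ β i j)
    (hcons : ∀ i, (∑ j, β i j) = φ i)
    (hstab : ∀ j, (∑ i, β i j) < μ j)
    (hlan : τ * (∑ i, ∑ j ∈ Finset.univ.erase i, β i j) < 1) :
    (∑ i, (V * (∑ j, β i j / (μ j - ∑ k, β k j)) +
           V * τ * (∑ j ∈ Finset.univ.erase i, β i j) /
             (1 - τ * (∑ k, ∑ l ∈ Finset.univ.erase k, β k l)) +
           κ * q i * (∑ k, β k i))) =
      (∑ j, V * (∑ k, β k j) / (μ j - ∑ k, β k j)) +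
        V * τ * (∑ k, ∑ l ∈ Finset.univ.erase k, β k l) /
          (1 - τ * (∑ k, ∑ l ∈ Finset.univ.erase k, β k l)) +
        (∑ j, κ * q j * (∑ k, β k j)) ∧
    ∀ β' : Fin N → Fin N → ℝ,
      (∀ i j, 0 ≤ β' i j) → (∀ i, (∑ j, β' i j) = φ i) →
      (∀ j, (∑ i, β' i j) < μ j) →
      τ * (∑ i, ∑ j ∈ Finset.univ.erase i, β' i j) < 1 →
      (∀ j, (∑ i, β' i j) = ∑ i, β i j) →
      (∑ i, ∑ j ∈ Finset.univ.erase i, β' i j) =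
        (∑ i, ∑ j ∈ Finset.univ.erase i, β i j) →
      (∑ i, (V * (∑ j, β' i j / (μ j - ∑ k, β' k j)) +
             V * τ * (∑ j ∈ Finset.univ.erase i, β' i j) /
               (1 - τ * (∑ k, ∑ l ∈ Finset.univ.erase k, β' k l)) +
             κ * q i * (∑ k, β' k i))) =
        (∑ i, (V * (∑ j, β i j / (μ j - ∑ k, β k j)) +
               V * τ * (∑ j ∈ Finset.univ.erase i, β i j) /
                 (1 - τ * (∑ k, ∑ l ∈ Finset.univ.erase k, β k l)) +
               κ * q i * (∑ k, β k i))) := by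
  refine ⟨key17 N V κ τ μ q β, ?_⟩
  intro β' _ _ _ _ hw hl
  rw [key17, key17]
  simp only [hw, hl]
end
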